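/- Let n be a positive integer and suppose r ∈ (0, π/2) satisfies sin r · cosh(π(n + 1/2) + (−1)^{n+1} r) = 1. Then r ≤ π e^{−π n}. -/

import Mathlib

open Real

/-- If `r ∈ (0, π/2)` satisfies `sin r · cosh(π(n + 1/2) + (−1)^{n+1} r) = 1`, then
`r ≤ π e^{−π n}`. -/
theorem root_correction_bound (n : ℕ) (hn : 1 ≤ n) (r : ℝ)
    (hr : r ∈ Set.Ioo 0 (π / 2))
    (heq : Real.sin r * Real.cosh (π * (n + 1/2) + (-1 : ℝ) ^ (n + 1) * r) = 1) :
    r ≤ π * Real.exp (-π * n) := by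
  obtain ⟨hr0, hr2⟩ := hr
  have hπ := Real.pi_pos
  set x := π * (n + 1/2) + (-1 : ℝ) ^ (n + 1) * r with hx
  have hsign : ((-1 : ℝ) ^ (n + 1) = 1) ∨ ((-1 : ℝ) ^ (n + 1) = -1) := by
    rcases Nat.even_or_odd (n+1) with h | h
    · exact Or.inl (Even.neg_one_pow h)
    · exact Or.inr (Odd.neg_one_pow h)
  have hn1 : (1 : ℝ) ≤ n := by exact_mod_cast hn
  have hxge : π * n ≤ x := by
    rcases hsign with h | h <;> rw [hx, h] <;> nlinarith
  -- cosh x ≥ cosh (π n) ≥ exp(π n)/2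
  have h1 : Real.cosh (π * n) ≤ Real.cosh x := by
    rw [Real.cosh_le_cosh]
    have h0 : (0:ℝ) ≤ π * n := by positivity
    rw [abs_of_nonneg h0, abs_of_nonneg (le_trans h0 hxge)]
    exact hxge
  have h2 : Real.exp (π * n) / 2 ≤ Real.cosh (π * n) := by
    rw [Real.cosh_eq]
    have := (Real.exp_pos (-(π * n))).le
    linarith
  -- sin r ≥ 2/π * r
  have h3 : 2 / π * r ≤ Real.sin r := Real.mul_le_sin hr0.le hr2.le
  have hcx : 0 < Real.cosh x := Real.cosh_pos x
  have key : 2 / π * r * (Real.exp (π * n) / 2) ≤ 1 := by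
    calc 2 / π * r * (Real.exp (π * n) / 2) ≤ Real.sin r * Real.cosh x := by
          apply mul_le_mul h3 (h2.trans h1) (by positivity) (Real.sin_nonneg_of_nonneg_of_le_pi hr0.le (by linarith))
      _ = 1 := heq
  have hexp : Real.exp (-π * n) = (Real.exp (π * n))⁻¹ := by
    rw [← Real.exp_neg]; ring_nf
  rw [hexp]
  have hep : 0 < Real.exp (π * n) := Real.exp_pos _
  have heq2 : 2 / π * r * (Real.exp (π * n) / 2) = r * Real.exp (π * n) / π := by
    field_simp
  have : r * Real.exp (π * n) ≤ π := by
    rw [heq2, div_le_one hπ] at key; exact key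
  calc r = r * Real.exp (π * n) * (Real.exp (π * n))⁻¹ := by field_simp
    _ ≤ π * (Real.exp (π * n))⁻¹ := by
        apply mul_le_mul_of_nonneg_right this (by positivity)
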